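/- For positive integers r, n, k, the value M_r(1;n,k) = (1/k^r) Σ_{d|k} c_r(n,k/d) equals 1 if k^r divides n, and 0 otherwise. -/

import Mathlib

open Finset

/-- Cohen's `r`-Ramanujan sum. -/
noncomputable def ramcr (r n k : ℕ) : ℂ :=
  ∑ m ∈ (Finset.Icc 1 (k ^ r)).filter
      (fun m => ∀ d ∈ Finset.Icc 2 (k ^ r), ¬(d ^ r ∣ m ∧ d ^ r ∣ k ^ r)),
    Complex.exp (2 * Real.pi * Complex.I * m * n / (k ^ r))

/-- `M_r(t;n,k) = (1/k^r) Σ_{d|k} c_r(n,k/d) t^d`. -/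
noncomputable def neckr (r : ℕ) (t : ℂ) (n k : ℕ) : ℂ :=
  (1 / (k : ℂ) ^ r) * ∑ d ∈ k.divisors, ramcr r n (k / d) * t ^ d

lemma lcm_pow_dvd_aux {r a b x : ℕ} (hr : r ≠ 0) (hx : x ≠ 0)
    (ha : a ^ r ∣ x) (hb : b ^ r ∣ x) : Nat.lcm a b ^ r ∣ x := by
  have ha0 : a ≠ 0 := by rintro rfl; exact hx (Nat.eq_zero_of_zero_dvd (by simpa [zero_pow hr] using ha))
  have hb0 : b ≠ 0 := by rintro rfl; exact hx (Nat.eq_zero_of_zero_dvd (by simpa [zero_pow hr] using hb))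
  have hl : Nat.lcm a b ≠ 0 := Nat.lcm_ne_zero ha0 hb0
  rw [← Nat.factorization_le_iff_dvd (pow_ne_zero _ hl) hx, Nat.factorization_pow,
    Nat.factorization_lcm ha0 hb0]
  rw [← Nat.factorization_le_iff_dvd (pow_ne_zero _ ha0) hx, Nat.factorization_pow] at ha
  rw [← Nat.factorization_le_iff_dvd (pow_ne_zero _ hb0) hx, Nat.factorization_pow] at hb
  rw [Finsupp.le_def] at *
  intro p
  have h1 := ha p
  have h2 := hb p
  simp only [Finsupp.smul_apply, Finsupp.sup_apply, smul_eq_mul] at *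
  rcases le_total (a.factorization p) (b.factorization p) with h | h
  · simpa [sup_of_le_right h, max_eq_right h] using h2
  · simpa [sup_of_le_left h, max_eq_left h] using h1

/-- The greatest `d ∣ k` with `d ^ r ∣ M`. -/
def gg (r k M : ℕ) : ℕ := ((Nat.divisors k).filter (fun d => d ^ r ∣ M)).sup id

section gg
variable {r k M : ℕ} (hk : k ≠ 0)
include hk

lemma gg_mem : gg r k M ∈ (Nat.divisors k).filter (fun d => d ^ r ∣ M) := by
  have hne : ((Nat.divisors k).filter (fun d => d ^ r ∣ M)).Nonempty :=
    ⟨1, by simp [Nat.mem_divisors, hk]⟩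
  obtain ⟨b, hb, he⟩ := Finset.exists_mem_eq_sup _ hne (id : ℕ → ℕ)
  rw [gg, he]; exact hb

lemma gg_dvd : gg r k M ∣ k := (Nat.mem_divisors.mp (Finset.mem_filter.mp (gg_mem hk)).1).1

lemma gg_pow_dvd : gg r k M ^ r ∣ M := (Finset.mem_filter.mp (gg_mem (M := M) hk)).2

lemma gg_pos : 0 < gg r k M := Nat.pos_of_dvd_of_pos (gg_dvd hk) (Nat.pos_of_ne_zero hk)

lemma le_gg {d : ℕ} (hd : d ∣ k) (hdM : d ^ r ∣ M) : d ≤ gg r k M :=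
  Finset.le_sup (f := id) (Finset.mem_filter.mpr ⟨Nat.mem_divisors.mpr ⟨hd, hk⟩, hdM⟩)

lemma gg_eq {e m : ℕ} (hr : r ≠ 0) (he : e ∣ k) (he0 : e ≠ 0) (hm : m ≠ 0)
    (hcond : ∀ d, 2 ≤ d → d ∣ e → ¬ d ^ r ∣ m) :
    gg r k ((k / e) ^ r * m) = k / e := by
  set g0 := k / e with hg0
  set M := g0 ^ r * m with hM
  have hg0dvd : g0 ∣ k := Nat.div_dvd_of_dvd he
  have hg0pos : 0 < g0 := Nat.div_pos (Nat.le_of_dvd (Nat.pos_of_ne_zero hk) he) (Nat.pos_of_ne_zero he0)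
  have hkeq : g0 * e = k := by
    rw [hg0, Nat.div_mul_cancel he]
  have hM0 : M ≠ 0 := by positivity
  refine le_antisymm ?_ (le_gg hk hg0dvd (Dvd.intro m rfl))
  set d := gg r k M with hd
  have hddvd : d ∣ k := gg_dvd hk
  have hdM : d ^ r ∣ M := gg_pow_dvd hk
  set c := Nat.lcm d g0 with hc
  have hck : c ∣ k := Nat.lcm_dvd hddvd hg0dvd
  have hcM : c ^ r ∣ M := lcm_pow_dvd_aux hr hM0 hdM (Dvd.intro m rfl)
  have hg0c : g0 ∣ c := Nat.dvd_lcm_right _ _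
  set u := c / g0 with hu
  have hcu : c = g0 * u := (Nat.mul_div_cancel' hg0c).symm
  have hue : u ∣ e := by
    have : g0 * u ∣ g0 * e := by rw [← hcu, hkeq]; exact hck
    exact (mul_dvd_mul_iff_left hg0pos.ne').mp this
  have hum : u ^ r ∣ m := by
    have : g0 ^ r * u ^ r ∣ g0 ^ r * m := by rw [← mul_pow, ← hcu]; exact hcM
    exact (mul_dvd_mul_iff_left (pow_ne_zero r hg0pos.ne')).mp this
  have hu1 : u = 1 := by
    by_contra h
    have hu0 : u ≠ 0 := by
      intro h0
      rw [h0, mul_zero] at hcu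
      exact (Nat.lcm_ne_zero (gg_pos hk).ne' hg0pos.ne') hcu
    exact hcond u ((Nat.two_le_iff u).mpr ⟨hu0, h⟩) hue hum
  have : c = g0 := by rw [hcu, hu1, mul_one]
  have hdg0 : d ∣ g0 := this ▸ Nat.dvd_lcm_left d g0
  exact Nat.le_of_dvd hg0pos hdg0

end gg

lemma geo_sum (n q : ℕ) (hq : q ≠ 0) :
    ∑ M ∈ Finset.Icc 1 q, Complex.exp (2 * Real.pi * Complex.I * M * n / q)
      = if q ∣ n then (q : ℂ) else 0 := by
  have hq' : (q : ℂ) ≠ 0 := Nat.cast_ne_zero.mpr hq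
  set ζ : ℂ := Complex.exp (2 * Real.pi * Complex.I * n / q) with hζ
  have hterm : ∀ M : ℕ, Complex.exp (2 * Real.pi * Complex.I * M * n / q) = ζ ^ M := by
    intro M
    rw [hζ, ← Complex.exp_nat_mul]
    congr 1
    field_simp
  have h2pi : (2 : ℂ) * Real.pi * Complex.I ≠ 0 := by
    simp [Real.pi_ne_zero, Complex.I_ne_zero]
  simp only [hterm]
  by_cases hdvd : q ∣ n
  · obtain ⟨c, rfl⟩ := hdvd
    have hz1 : ζ = 1 := by
      rw [hζ, Complex.exp_eq_one_iff]
      refine ⟨c, ?_⟩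
      push_cast
      field_simp
    rw [if_pos (dvd_mul_right q c)]
    simp [hz1, Nat.card_Icc]
  · have hz1 : ζ ≠ 1 := by
      intro h
      rw [hζ, Complex.exp_eq_one_iff] at h
      obtain ⟨z, hzz⟩ := h
      apply hdvd
      rw [div_eq_iff hq'] at hzz
      have hnc : (n : ℂ) = z * q := by
        apply mul_left_cancel₀ h2pi
        ring_nf
        ring_nf at hzz
        linear_combination hzz
      have : (n : ℤ) = z * q := by exact_mod_cast hnc
      exact Int.ofNat_dvd.mp ⟨z, by rw [this]; ring⟩
    have hzq : ζ ^ q = 1 := by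
      rw [hζ, ← Complex.exp_nat_mul, Complex.exp_eq_one_iff]
      refine ⟨n, ?_⟩
      field_simp
      push_cast
      ring
    have : Finset.Icc 1 q = Finset.Ico 1 (q + 1) := by
      rw [Finset.Ico_add_one_right_eq_Icc]
    rw [this, Finset.sum_Ico_eq_sum_range]
    simp only [Nat.add_sub_cancel]
    have : ∀ i, ζ ^ (1 + i) = ζ * ζ ^ i := fun i => by rw [pow_add, pow_one]
    simp only [this, ← Finset.mul_sum, geom_sum_eq hz1, hzq]
    simp [hdvd]

lemma key_sum (r n k : ℕ) (hr : 0 < r) (hk : 0 < k) :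
    ∑ e ∈ k.divisors, ramcr r n e
      = ∑ M ∈ Finset.Icc 1 (k ^ r),
          Complex.exp (2 * Real.pi * Complex.I * M * n / ((k : ℂ) ^ r)) := by
  have hk0 : k ≠ 0 := hk.ne'
  have hr0 : r ≠ 0 := hr.ne'
  simp only [ramcr]
  rw [Finset.sum_sigma']
  -- clean condition extraction
  have hmem : ∀ p : (_ : ℕ) × ℕ,
      p ∈ k.divisors.sigma (fun e => (Finset.Icc 1 (e ^ r)).filter
        (fun m => ∀ d ∈ Finset.Icc 2 (e ^ r), ¬(d ^ r ∣ m ∧ d ^ r ∣ e ^ r))) →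
      p.1 ∣ k ∧ p.1 ≠ 0 ∧ 1 ≤ p.2 ∧ p.2 ≤ p.1 ^ r ∧
        ∀ d, 2 ≤ d → d ∣ p.1 → ¬ d ^ r ∣ p.2 := by
    rintro ⟨e, m⟩ hp
    rw [Finset.mem_sigma, Nat.mem_divisors, Finset.mem_filter, Finset.mem_Icc] at hp
    obtain ⟨⟨he, -⟩, ⟨hm1, hm2⟩, hcond⟩ := hp
    have he0 : e ≠ 0 := by
      rintro rfl
      exact hk0 (Nat.eq_zero_of_zero_dvd he)
    refine ⟨he, he0, hm1, hm2, fun d hd2 hde hdm => ?_⟩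
    have hdle : d ≤ e ^ r :=
      le_trans (Nat.le_of_dvd (Nat.pos_of_ne_zero he0) hde) (Nat.le_self_pow hr0 e)
    exact hcond d (Finset.mem_Icc.mpr ⟨hd2, hdle⟩) ⟨hdm, pow_dvd_pow_of_dvd hde r⟩
  refine Finset.sum_nbij' (fun p => (k / p.1) ^ r * p.2)
    (fun M => ⟨k / gg r k M, M / (gg r k M) ^ r⟩) ?_ ?_ ?_ ?_ ?_
  · -- hi
    rintro p hp
    obtain ⟨he, he0, hm1, hm2, -⟩ := hmem p hp
    obtain ⟨e, m⟩ := p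
    simp only at *
    rw [Finset.mem_Icc]
    constructor
    · have h1 : 0 < k / e := Nat.div_pos (Nat.le_of_dvd hk he) (Nat.pos_of_ne_zero he0)
      have : 0 < (k / e) ^ r * m := Nat.mul_pos (pow_pos h1 r) hm1
      omega
    · calc (k / e) ^ r * m ≤ (k / e) ^ r * e ^ r := Nat.mul_le_mul_left _ hm2
        _ = k ^ r := by rw [← mul_pow, Nat.div_mul_cancel he]
  · -- hj
    intro M hM
    rw [Finset.mem_Icc] at hM
    obtain ⟨hM1, hM2⟩ := hM
    set g := gg r k M with hg
    have hgd : g ∣ k := gg_dvd hk0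
    have hgM : g ^ r ∣ M := gg_pow_dvd hk0
    have hgpos : 0 < g := gg_pos hk0
    have hMeq : g ^ r * (M / g ^ r) = M := Nat.mul_div_cancel' hgM
    have hke : g * (k / g) = k := Nat.mul_div_cancel' hgd
    rw [Finset.mem_sigma, Nat.mem_divisors, Finset.mem_filter, Finset.mem_Icc]
    refine ⟨⟨Nat.div_dvd_of_dvd hgd, hk0⟩, ⟨?_, ?_⟩, ?_⟩
    · exact Nat.div_pos (Nat.le_of_dvd (by omega) hgM) (pow_pos hgpos r)
    · have hkr : g ^ r * (k / g) ^ r = k ^ r := by rw [← mul_pow, hke]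
      have : g ^ r * (M / g ^ r) ≤ g ^ r * (k / g) ^ r := by rw [hMeq, hkr]; exact hM2
      exact Nat.le_of_mul_le_mul_left this (pow_pos hgpos r)
    · rintro d hd ⟨hdm, hde⟩
      rw [Finset.mem_Icc] at hd
      have hdkg : d ∣ k / g := (Nat.pow_dvd_pow_iff hr0).mp hde
      have hgdk : g * d ∣ k := by
        rw [← hke]
        exact mul_dvd_mul_left g hdkg
      have hgdM : (g * d) ^ r ∣ M := by
        rw [mul_pow, ← hMeq]
        exact mul_dvd_mul_left (g ^ r) hdm
      have hle : g * d ≤ g := le_gg hk0 hgdk hgdM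
      have : g * 2 ≤ g * d := Nat.mul_le_mul_left _ hd.1
      omega
  · -- left_inv
    intro p hp
    obtain ⟨he, he0, hm1, hm2, hcond⟩ := hmem p hp
    obtain ⟨e, m⟩ := p
    simp only at *
    have hgeq : gg r k ((k / e) ^ r * m) = k / e :=
      gg_eq hk0 hr0 he he0 (by omega) hcond
    have h1 : 0 < (k / e) ^ r :=
      pow_pos (Nat.div_pos (Nat.le_of_dvd hk he) (Nat.pos_of_ne_zero he0)) r
    rw [hgeq, Nat.div_div_self he hk0, Nat.mul_div_cancel_left m h1]
  · -- right_inv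
    intro M hM
    simp only
    rw [Nat.div_div_self (gg_dvd hk0) hk0, Nat.mul_div_cancel' (gg_pow_dvd hk0)]
  · -- values
    intro p hp
    obtain ⟨he, he0, hm1, hm2, -⟩ := hmem p hp
    obtain ⟨e, m⟩ := p
    simp only at *
    congr 1
    have he' : (e : ℂ) ≠ 0 := Nat.cast_ne_zero.mpr he0
    have hq0 : k / e ≠ 0 :=
      (Nat.div_pos (Nat.le_of_dvd hk he) (Nat.pos_of_ne_zero he0)).ne'
    have hq' : ((k / e : ℕ) : ℂ) ≠ 0 := Nat.cast_ne_zero.mpr hq0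
    have hcast : ((k / e : ℕ) : ℂ) ^ r * (e : ℂ) ^ r = (k : ℂ) ^ r := by
      have : (k / e) ^ r * e ^ r = k ^ r := by rw [← mul_pow, Nat.div_mul_cancel he]
      exact_mod_cast this
    push_cast
    rw [div_eq_div_iff (pow_ne_zero r he')
      (by rw [← hcast]; exact mul_ne_zero (pow_ne_zero _ hq') (pow_ne_zero _ he'))]
    rw [← hcast]
    ring

theorem stmt11 (r n k : ℕ) (hr : 0 < r) (hn : 0 < n) (hk : 0 < k) :
    neckr r 1 n k = if k ^ r ∣ n then 1 else 0 := by
  have hk0 : k ≠ 0 := hk.ne'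
  have hq0 : k ^ r ≠ 0 := pow_ne_zero r hk0
  have hq' : (k : ℂ) ^ r ≠ 0 := pow_ne_zero r (Nat.cast_ne_zero.mpr hk0)
  rw [neckr]
  simp only [one_pow, mul_one]
  rw [Nat.sum_div_divisors k (ramcr r n), key_sum r n k hr hk]
  have hgeo : ∑ M ∈ Finset.Icc 1 (k ^ r),
      Complex.exp (2 * Real.pi * Complex.I * M * n / ((k : ℂ) ^ r))
      = if k ^ r ∣ n then ((k ^ r : ℕ) : ℂ) else 0 := by
    rw [← geo_sum n (k ^ r) hq0]
    simp [Nat.cast_pow]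
  rw [hgeo]
  split_ifs
  · push_cast
    rw [one_div, inv_mul_cancel₀ hq']
  · rw [mul_zero]
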